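/- For points a, b, c, d, p all on the unit circle in ℂ (a, b, c, d pairwise distinct), the feet of the perpendiculars from p onto the four Simson lines of the triangles bcd, acd, abd, abc are collinear (this line is the Simson–Wallace line of the cyclic quadrangle). -/

import Mathlib

set_option maxHeartbeats 1000000

open Complex

/-- Perpendicular foot from `p` to the line through two distinct points `z`, `w` of `ℂ`. -/
def IsFootOnLine (p z w f : ℂ) : Prop :=
  (∃ t : ℝ, f = z + t • (w - z)) ∧ ((starRingEnd ℂ) (w - z) * (p - f)).re = 0

/-- Perpendicular foot from `p` to the chord of the unit circle through `u` and `v`. -/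
noncomputable def chordFoot (p u v : ℂ) : ℂ := (u + v + p - u * v * (starRingEnd ℂ p)) / 2

/-- Explicit formula for the foot from `p` onto the Simson line of triangle `x y u`. -/
noncomputable def sFoot (p x y u : ℂ) : ℂ :=
  (3 * p + x + y + u - (x * y + x * u + y * u) * (starRingEnd ℂ p)
    + x * y * u * (starRingEnd ℂ p) ^ 2) / 4

lemma foot_unique {p z w f g : ℂ} (hzw : z ≠ w)
    (hf : IsFootOnLine p z w f) (hg : IsFootOnLine p z w g) : f = g := by
  obtain ⟨⟨s, hs⟩, hf2⟩ := hf
  obtain ⟨⟨t, ht⟩, hg2⟩ := hg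
  have hne : w - z ≠ 0 := sub_ne_zero.mpr (Ne.symm hzw)
  have key : ((starRingEnd ℂ) (w - z) * (f - g)).re = 0 := by
    have : (starRingEnd ℂ) (w - z) * (f - g)
        = (starRingEnd ℂ) (w - z) * (p - g) - (starRingEnd ℂ) (w - z) * (p - f) := by ring
    rw [this, Complex.sub_re, hf2, hg2, sub_zero]
  have hfg : f - g = ((s - t : ℝ) : ℂ) * (w - z) := by
    rw [hs, ht]; push_cast [Complex.real_smul]; ring
  rw [hfg] at key
  have hz : (s - t) * Complex.normSq (w - z) = 0 := by
    rw [show (starRingEnd ℂ) (w - z) * (((s - t : ℝ) : ℂ) * (w - z))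
        = ((s - t : ℝ) : ℂ) * ((w - z) * (starRingEnd ℂ) (w - z)) by ring,
      Complex.mul_conj] at key
    simpa using key
  have hst : s = t := by
    have hnsq : Complex.normSq (w - z) ≠ 0 := by
      simpa [Complex.normSq_eq_zero] using hne
    rcases mul_eq_zero.mp hz with h | h
    · linarith [sub_eq_zero.mp h]
    · exact absurd h hnsq
  rw [hs, ht, hst]

lemma real_ratio {z w : ℂ} (hw : w ≠ 0)
    (h : z * (starRingEnd ℂ) w = (starRingEnd ℂ) z * w) : ∃ t : ℝ, z = t • w := by
  refine ⟨(z / w).re, ?_⟩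
  have hr : ((z / w).re : ℂ) = z / w := by
    rw [← Complex.conj_eq_iff_re, map_div₀]
    rw [div_eq_div_iff (by simpa using hw) hw]
    linear_combination -h
  rw [Complex.real_smul, hr]
  field_simp

lemma foot_main {p x y u : ℂ} (hp : p * (starRingEnd ℂ) p = 1)
    (hx : x * (starRingEnd ℂ) x = 1) (hy : y * (starRingEnd ℂ) y = 1)
    (hu : u * (starRingEnd ℂ) u = 1) (hxu : x ≠ u) (hpy : p ≠ y) :
    chordFoot p x y ≠ chordFoot p y u ∧
    IsFootOnLine p (chordFoot p x y) (chordFoot p y u) (sFoot p x y u) := by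
  have hp0 : p ≠ 0 := by rintro rfl; simp at hp
  have hx0 : x ≠ 0 := by rintro rfl; simp at hx
  have hy0 : y ≠ 0 := by rintro rfl; simp at hy
  have hu0 : u ≠ 0 := by rintro rfl; simp at hu
  have hp' : (starRingEnd ℂ) p = p⁻¹ := eq_inv_of_mul_eq_one_right hp
  have hx' : (starRingEnd ℂ) x = x⁻¹ := eq_inv_of_mul_eq_one_right hx
  have hy' : (starRingEnd ℂ) y = y⁻¹ := eq_inv_of_mul_eq_one_right hy
  have hu' : (starRingEnd ℂ) u = u⁻¹ := eq_inv_of_mul_eq_one_right hu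
  have hux : u - x ≠ 0 := sub_ne_zero.mpr (Ne.symm hxu)
  have hpy' : p - y ≠ 0 := sub_ne_zero.mpr hpy
  have hdiff : chordFoot p y u - chordFoot p x y = (u - x) * (p - y) * p⁻¹ / 2 := by
    simp only [chordFoot, hp']
    field_simp
    ring
  have hne : chordFoot p y u - chordFoot p x y ≠ 0 := by
    rw [hdiff]
    exact div_ne_zero (mul_ne_zero (mul_ne_zero hux hpy') (inv_ne_zero hp0)) two_ne_zero
  have hps : p - sFoot p x y u = (p - x) * (p - y) * (p - u) / (4 * p ^ 2) := by
    simp only [sFoot, hp']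
    field_simp
    ring
  constructor
  · intro hzw
    exact hne (by rw [hzw, sub_self])
  constructor
  · -- existence of the real parameter
    set N : ℂ := (p - x) * (p + u) with hN
    set D : ℂ := 2 * (u - x) * p with hD
    have hD0 : D ≠ 0 := by
      rw [hD]; exact mul_ne_zero (mul_ne_zero two_ne_zero hux) hp0
    have hDc0 : (starRingEnd ℂ) D ≠ 0 := by
      simpa using hD0
    have hτreal : (((N / D).re : ℝ) : ℂ) = N / D := by
      rw [← Complex.conj_eq_iff_re, map_div₀, div_eq_div_iff hDc0 hD0]
      simp only [hN, hD, map_mul, map_sub, map_add, map_ofNat, hp', hx', hu']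
      field_simp
      ring
    refine ⟨(N / D).re, ?_⟩
    rw [Complex.real_smul, hτreal, hdiff]
    have hstep : N / D * ((u - x) * (p - y) * p⁻¹ / 2)
        = (p - x) * (p + u) * (p - y) / (4 * p ^ 2) := by
      rw [hN, hD]
      field_simp
      ring
    rw [hstep]
    simp only [sFoot, chordFoot, hp']
    field_simp
    ring
  · -- perpendicularity
    have hAc : (starRingEnd ℂ) (chordFoot p y u - chordFoot p x y)
        = (u⁻¹ - x⁻¹) * (p⁻¹ - y⁻¹) * p / 2 := by
      rw [hdiff]
      simp only [map_div₀, map_mul, map_sub, map_inv₀, map_ofNat, hp', hx', hy', hu', inv_inv]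
    rw [hAc, hps]
    have hE1 : (u⁻¹ - x⁻¹) * (p⁻¹ - y⁻¹) * p / 2 * ((p - x) * (p - y) * (p - u) / (4 * p ^ 2))
        = (x - u) * (y - p) * (p - x) * (p - y) * (p - u) / (8 * x * y * u * p ^ 2) := by
      rw [inv_sub_inv hu0 hx0, inv_sub_inv hp0 hy0]
      field_simp
      ring
    rw [hE1]
    set E : ℂ := (x - u) * (y - p) * (p - x) * (p - y) * (p - u) / (8 * x * y * u * p ^ 2)
      with hE
    have hcE : (starRingEnd ℂ) E = -E := by
      rw [hE]
      simp only [map_div₀, map_mul, map_sub, map_inv₀, map_pow, map_ofNat,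
        hp', hx', hy', hu', inv_inv]
      rw [inv_sub_inv hx0 hu0, inv_sub_inv hy0 hp0, inv_sub_inv hp0 hx0,
        inv_sub_inv hp0 hy0, inv_sub_inv hp0 hu0]
      rw [← neg_div]
      field_simp
      ring
    have key : E + (starRingEnd ℂ) E = 0 := by rw [hcE]; ring
    have h2 : ((2 * E.re : ℝ) : ℂ) = 0 := by
      rw [← Complex.add_conj]; exact key
    have h3 : (2 : ℝ) * E.re = 0 := by exact_mod_cast h2
    linarith

/-- Simson–Wallace line of a cyclic quadrangle: for `a, b, c, d, p` on the unit circle,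
the feet of the perpendiculars from `p` onto the Simson lines of the four triangles
`bcd`, `acd`, `abd`, `abc` are collinear. -/
theorem simson_line_of_quadrangle (a b c d p : ℂ)
    (ha : ‖a‖ = 1) (hb : ‖b‖ = 1) (hc : ‖c‖ = 1)
    (hd : ‖d‖ = 1) (hp : ‖p‖ = 1)
    (hdist : [a, b, c, d].Pairwise (· ≠ ·))
    (hpv : p ≠ a ∧ p ≠ b ∧ p ≠ c ∧ p ≠ d)
    (h₁ h₂ h₃ h₄ : ℂ)
    (hh₁ : IsFootOnLine p (chordFoot p b c) (chordFoot p c d) h₁)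
    (hh₂ : IsFootOnLine p (chordFoot p a c) (chordFoot p c d) h₂)
    (hh₃ : IsFootOnLine p (chordFoot p a b) (chordFoot p b d) h₃)
    (hh₄ : IsFootOnLine p (chordFoot p a b) (chordFoot p b c) h₄) :
    Collinear ℝ ({h₁, h₂, h₃, h₄} : Set ℂ) := by
  obtain ⟨hpa, hpb, hpc, hpd⟩ := hpv
  have hab : a ≠ b := by simp [List.pairwise_cons] at hdist; tauto
  have hac : a ≠ c := by simp [List.pairwise_cons] at hdist; tauto
  have had : a ≠ d := by simp [List.pairwise_cons] at hdist; tauto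
  have hbc : b ≠ c := by simp [List.pairwise_cons] at hdist; tauto
  have hbd : b ≠ d := by simp [List.pairwise_cons] at hdist; tauto
  have hcd : c ≠ d := by simp [List.pairwise_cons] at hdist; tauto
  have ua : a * (starRingEnd ℂ) a = 1 := by
    rw [Complex.mul_conj]; norm_cast; rw [Complex.normSq_eq_norm_sq, ha]; norm_num
  have ub : b * (starRingEnd ℂ) b = 1 := by
    rw [Complex.mul_conj]; norm_cast; rw [Complex.normSq_eq_norm_sq, hb]; norm_num
  have uc : c * (starRingEnd ℂ) c = 1 := by
    rw [Complex.mul_conj]; norm_cast; rw [Complex.normSq_eq_norm_sq, hc]; norm_num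
  have ud : d * (starRingEnd ℂ) d = 1 := by
    rw [Complex.mul_conj]; norm_cast; rw [Complex.normSq_eq_norm_sq, hd]; norm_num
  have up : p * (starRingEnd ℂ) p = 1 := by
    rw [Complex.mul_conj]; norm_cast; rw [Complex.normSq_eq_norm_sq, hp]; norm_num
  have f1 := foot_main up ub uc ud hbd hpc
  have f2 := foot_main up ua uc ud had hpc
  have f3 := foot_main up ua ub ud had hpb
  have f4 := foot_main up ua ub uc hac hpb
  have e1 : h₁ = sFoot p b c d := foot_unique f1.1 hh₁ f1.2
  have e2 : h₂ = sFoot p a c d := foot_unique f2.1 hh₂ f2.2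
  have e3 : h₃ = sFoot p a b d := foot_unique f3.1 hh₃ f3.2
  have e4 : h₄ = sFoot p a b c := foot_unique f4.1 hh₄ f4.2
  -- nonzero basics
  have hp0 : p ≠ 0 := by rintro rfl; simp at up
  have ha0 : a ≠ 0 := by rintro rfl; simp at ua
  have hb0 : b ≠ 0 := by rintro rfl; simp at ub
  have hc0 : c ≠ 0 := by rintro rfl; simp at uc
  have hd0 : d ≠ 0 := by rintro rfl; simp at ud
  have hp' : (starRingEnd ℂ) p = p⁻¹ := eq_inv_of_mul_eq_one_right up
  have ha' : (starRingEnd ℂ) a = a⁻¹ := eq_inv_of_mul_eq_one_right ua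
  have hb' : (starRingEnd ℂ) b = b⁻¹ := eq_inv_of_mul_eq_one_right ub
  have hc' : (starRingEnd ℂ) c = c⁻¹ := eq_inv_of_mul_eq_one_right uc
  have hd' : (starRingEnd ℂ) d = d⁻¹ := eq_inv_of_mul_eq_one_right ud
  have hab' : a - b ≠ 0 := sub_ne_zero.mpr hab
  have hpc' : p - c ≠ 0 := sub_ne_zero.mpr hpc
  have hpd' : p - d ≠ 0 := sub_ne_zero.mpr hpd
  -- differences of sFoot
  have w2 : sFoot p a c d - sFoot p b c d = (a - b) * (p - c) * (p - d) * p⁻¹ ^ 2 / 4 := by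
    simp only [sFoot, hp']
    field_simp
    ring
  have w3 : sFoot p a b d - sFoot p b c d = (a - c) * (p - b) * (p - d) * p⁻¹ ^ 2 / 4 := by
    simp only [sFoot, hp']
    field_simp
    ring
  have w4 : sFoot p a b c - sFoot p b c d = (a - d) * (p - b) * (p - c) * p⁻¹ ^ 2 / 4 := by
    simp only [sFoot, hp']
    field_simp
    ring
  have hw0 : sFoot p a c d - sFoot p b c d ≠ 0 := by
    rw [w2]
    exact div_ne_zero (mul_ne_zero (mul_ne_zero (mul_ne_zero hab' hpc') hpd')
      (pow_ne_zero _ (inv_ne_zero hp0))) (by norm_num)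
  -- conj-symmetry of ratios
  have r3 : ∃ t : ℝ, sFoot p a b d - sFoot p b c d = t • (sFoot p a c d - sFoot p b c d) := by
    apply real_ratio hw0
    rw [w2, w3]
    simp only [map_div₀, map_mul, map_sub, map_inv₀, map_pow, map_ofNat,
      hp', ha', hb', hc', hd', inv_inv]
    field_simp
    ring
  have r4 : ∃ t : ℝ, sFoot p a b c - sFoot p b c d = t • (sFoot p a c d - sFoot p b c d) := by
    apply real_ratio hw0
    rw [w2, w4]
    simp only [map_div₀, map_mul, map_sub, map_inv₀, map_pow, map_ofNat,
      hp', ha', hb', hc', hd', inv_inv]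
    field_simp
    ring
  obtain ⟨t3, ht3⟩ := r3
  obtain ⟨t4, ht4⟩ := r4
  rw [collinear_iff_exists_forall_eq_smul_vadd]
  refine ⟨sFoot p b c d, sFoot p a c d - sFoot p b c d, ?_⟩
  intro z hz
  simp only [Set.mem_insert_iff, Set.mem_singleton_iff] at hz
  rcases hz with rfl | rfl | rfl | rfl
  · exact ⟨0, by rw [e1]; simp⟩
  · refine ⟨1, ?_⟩
    rw [e2]; simp [vadd_eq_add]
  · refine ⟨t3, ?_⟩
    rw [e3]
    have : sFoot p a b d = t3 • (sFoot p a c d - sFoot p b c d) + sFoot p b c d := by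
      rw [← ht3]; ring
    simpa [vadd_eq_add] using this
  · refine ⟨t4, ?_⟩
    rw [e4]
    have : sFoot p a b c = t4 • (sFoot p a c d - sFoot p b c d) + sFoot p b c d := by
      rw [← ht4]; ring
    simpa [vadd_eq_add] using this
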